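/- Let g : ℝ → ℝ be defined by g(x) = |x| + log(1 + |x|), and for a function w : ℝ → ℝ let Δ_w(x, y) := 2·w(x) + w(y) − w(2x + y). Then Δ_g(x, y) ≥ (3/8)·x² for all (x, y) ∈ ℝ² with |x| ≤ 1/2. -/

import Mathlib

theorem Delta_g_ge_quadratic (g : ℝ → ℝ) (hg : ∀ x : ℝ, g x = |x| + Real.log (1 + |x|))
    (Δg : ℝ → ℝ → ℝ) (hΔ : ∀ x y : ℝ, Δg x y = 2 * g x + g y - g (2 * x + y)) :
    ∀ x y : ℝ, |x| ≤ 1 / 2 → Δg x y ≥ (3 / 8) * x ^ 2 := by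
  intro x y hx
  rw [hΔ, hg, hg, hg]
  set a := |x| with ha
  set t := |y| with ht
  set s := |2 * x + y| with hs
  have ha0 : 0 ≤ a := abs_nonneg x
  have ht0 : 0 ≤ t := abs_nonneg y
  have hs0 : 0 ≤ s := abs_nonneg _
  have hst : s ≤ 2 * a + t := by
    calc s ≤ |2 * x| + |y| := abs_add_le _ _
    _ = 2 * a + t := by rw [abs_mul]; norm_num [ha, ht]
  have h1a : (0:ℝ) < 1 + a := by linarith
  have h1t : (0:ℝ) < 1 + t := by linarith
  have h12a : (0:ℝ) < 1 + 2 * a := by linarith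
  have h1at : (0:ℝ) < 1 + (2 * a + t) := by linarith
  have hA : Real.log (1 + s) ≤ Real.log (1 + (2 * a + t)) :=
    Real.log_le_log (by linarith) (by linarith)
  have hB : Real.log (1 + (2 * a + t)) ≤ Real.log (1 + 2 * a) + Real.log (1 + t) := by
    rw [← Real.log_mul (ne_of_gt h12a) (ne_of_gt h1t)]
    apply Real.log_le_log h1at
    nlinarith
  have hC : Real.log (1 + 2 * a) + Real.log (1 + a ^ 2 / 2) ≤ 2 * Real.log (1 + a) := by
    have h2 : 2 * Real.log (1 + a) = Real.log ((1 + a) * (1 + a)) := by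
      rw [Real.log_mul (ne_of_gt h1a) (ne_of_gt h1a)]; ring
    rw [← Real.log_mul (ne_of_gt h12a) (by positivity), h2]
    apply Real.log_le_log (by positivity)
    nlinarith [sq_nonneg a, sq_nonneg (a - 1/2)]
  have hD : Real.log (1 + a ^ 2 / 2) ≥ 3 / 8 * a ^ 2 := by
    have h1u : (0:ℝ) < 1 + a ^ 2 / 2 := by positivity
    have hlog : Real.log ((1 + a ^ 2 / 2)⁻¹) ≤ (1 + a ^ 2 / 2)⁻¹ - 1 :=
      Real.log_le_sub_one_of_pos (by positivity)
    rw [Real.log_inv] at hlog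
    have ha2 : a ^ 2 ≤ 1 / 4 := by nlinarith
    have hinv : (1 + a ^ 2 / 2)⁻¹ ≤ 1 - 3 / 8 * a ^ 2 := by
      rw [inv_eq_one_div, div_le_iff₀ h1u]
      nlinarith
    linarith
  have hxa : x ^ 2 = a ^ 2 := (sq_abs x).symm
  rw [hxa]
  linarith
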